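/- Let A be a finite set and let H ⊆ A × A be the edge set of a directed graph on A. Let B be the set of bridge edges of H, and for every strongly connected component S of H choose a maximal child C_S of the edge set H ∩ (S × S). Then the edge set B ∪ ⋃_S C_S (the union taken over all strongly connected components S of H) is a maximal child of H. -/

import Mathlib

/-- The edge relation of an edge set `E ⊆ A × A`. -/
def EdgeRel {A : Type*} (E : Set (A × A)) : A → A → Prop := fun u v => (u, v) ∈ E

/-- An edge set is acyclic if no vertex has a path of length ≥ 1 back to itself. -/
def AcyclicEdges {A : Type*} (E : Set (A × A)) : Prop :=
  ∀ a : A, ¬ Relation.TransGen (EdgeRel E) a a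

/-- Two vertices are strongly connected in `E` if they are equal or there are paths
of length ≥ 1 both ways. -/
def StronglyConn {A : Type*} (E : Set (A × A)) (u v : A) : Prop :=
  u = v ∨ (Relation.TransGen (EdgeRel E) u v ∧ Relation.TransGen (EdgeRel E) v u)

/-- `S` is a strongly connected component of `E`: an equivalence class of the
strongly-connected relation. -/
def IsSCC {A : Type*} (E : Set (A × A)) (S : Set A) : Prop :=
  ∃ a : A, S = {b : A | StronglyConn E a b}

/-- The bridge edges of `E`: edges whose endpoints are not strongly connected in `E`. -/
def BridgeEdges {A : Type*} (E : Set (A × A)) : Set (A × A) :=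
  {e | e ∈ E ∧ ¬ StronglyConn E e.1 e.2}

/-- `C` is a maximal child of the directed graph with edge set `H`. -/
def MaximalChild {A : Type*} (H C : Set (A × A)) : Prop :=
  C ⊆ H ∧ AcyclicEdges C ∧ ∀ e ∈ H \ C, ¬ AcyclicEdges (C ∪ {e})

lemma sc_symm {A : Type*} {E : Set (A × A)} {u v : A} (h : StronglyConn E u v) :
    StronglyConn E v u := by
  rcases h with rfl | ⟨h1, h2⟩
  · exact Or.inl rfl
  · exact Or.inr ⟨h2, h1⟩

lemma sc_trans {A : Type*} {E : Set (A × A)} {u v w : A}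
    (h1 : StronglyConn E u v) (h2 : StronglyConn E v w) : StronglyConn E u w := by
  rcases h1 with rfl | ⟨a1, a2⟩
  · exact h2
  rcases h2 with rfl | ⟨b1, b2⟩
  · exact Or.inr ⟨a1, a2⟩
  · exact Or.inr ⟨a1.trans b1, b2.trans a2⟩

lemma rtg_restrict {α : Type*} (r : α → α → Prop) (a d : α) :
    ∀ {b c}, Relation.ReflTransGen r b c → Relation.ReflTransGen r a b →
      Relation.ReflTransGen r c d →
      Relation.ReflTransGen
        (fun u v => r u v ∧ Relation.ReflTransGen r a u ∧ Relation.ReflTransGen r v d) b c := by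
  intro b c h
  induction h with
  | refl => intro _ _; exact .refl
  | @tail c' c hbc' hc'c ih =>
    intro hab hcd
    exact (ih hab ((Relation.ReflTransGen.single hc'c).trans hcd)).tail
      ⟨hc'c, hab.trans hbc', hcd⟩

theorem bridges_union_sccMaxChildren_isMaximalChild {A : Type*} [Fintype A]
    (H : Set (A × A)) (Cc : Set A → Set (A × A))
    (hCc : ∀ S : Set A, IsSCC H S → MaximalChild (H ∩ S ×ˢ S) (Cc S)) :
    MaximalChild H (BridgeEdges H ∪ ⋃ S ∈ {S : Set A | IsSCC H S}, Cc S) := by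
  set D : Set (A × A) := BridgeEdges H ∪ ⋃ S ∈ {S : Set A | IsSCC H S}, Cc S with hDdef
  have hDsub : D ⊆ H := by
    intro e he
    rcases he with he | he
    · exact he.1
    · simp only [Set.mem_iUnion] at he
      obtain ⟨S, hS, heS⟩ := he
      exact ((hCc S hS).1 heS).1
  have hDH : ∀ x y : A, EdgeRel D x y → EdgeRel H x y := fun x y h => hDsub h
  have hAcc : AcyclicEdges D := by
    intro a hcyc
    obtain ⟨b, hab, hba⟩ := (Relation.TransGen.head'_iff).mp hcyc
    have hrestr := rtg_restrict (EdgeRel D) a a hba (Relation.ReflTransGen.single hab)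
      Relation.ReflTransGen.refl
    set Sa : Set A := {x | StronglyConn H a x} with hSadef
    have hSa : IsSCC H Sa := ⟨a, rfl⟩
    have key : ∀ u v : A,
        (EdgeRel D u v ∧ Relation.ReflTransGen (EdgeRel D) a u ∧
          Relation.ReflTransGen (EdgeRel D) v a) → EdgeRel (Cc Sa) u v := by
      rintro u v ⟨huv, hau, hva⟩
      have scau : StronglyConn H a u := by
        rcases Relation.reflTransGen_iff_eq_or_transGen.mp hau with h | h
        · exact Or.inl h.symm
        · exact Or.inr ⟨Relation.TransGen.mono hDH _ _ h, Relation.TransGen.mono hDH _ _ (Relation.TransGen.head' huv hva)⟩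
      have scav : StronglyConn H a v := by
        rcases Relation.reflTransGen_iff_eq_or_transGen.mp hva with h | h
        · exact Or.inl h
        · exact Or.inr ⟨Relation.TransGen.mono hDH _ _ (Relation.TransGen.tail' hau huv), Relation.TransGen.mono hDH _ _ h⟩
      rcases huv with hbr | hun
      · exact absurd (sc_trans (sc_symm scau) scav) hbr.2
      · simp only [Set.mem_iUnion] at hun
        obtain ⟨S, hS, hmem⟩ := hun
        obtain ⟨s, rfl⟩ := hS
        have hprod := (hCc _ ⟨s, rfl⟩).1 hmem
        have hsu : StronglyConn H s u := hprod.2.1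
        have hSeq : {b : A | StronglyConn H s b} = Sa := by
          ext x
          constructor
          · intro hx
            exact sc_trans (sc_trans scau (sc_symm hsu)) hx
          · intro hx
            exact sc_trans (sc_trans hsu (sc_symm scau)) hx
        rw [hSeq] at hmem
        exact hmem
    have hcyc' : Relation.TransGen (EdgeRel (Cc Sa)) a a :=
      Relation.TransGen.head' (key a b ⟨hab, .refl, hba⟩)
        (Relation.ReflTransGen.mono (fun u v h => key u v h) _ _ hrestr)
    exact (hCc Sa hSa).2.1 a hcyc'
  refine ⟨hDsub, hAcc, ?_⟩
  rintro ⟨u, v⟩ he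
  have hsc : StronglyConn H u v := by
    by_contra hn
    exact he.2 (Or.inl ⟨he.1, hn⟩)
  set Su : Set A := {b | StronglyConn H u b} with hSudef
  have hSu : IsSCC H Su := ⟨u, rfl⟩
  have hSumem : Su ∈ {S : Set A | IsSCC H S} := hSu
  have hmem : (u, v) ∈ (H ∩ Su ×ˢ Su) \ Cc Su := by
    refine ⟨⟨he.1, ⟨Or.inl rfl, hsc⟩⟩, ?_⟩
    intro hm
    exact he.2 (Or.inr (Set.mem_biUnion hSumem hm))
  have hnot := (hCc Su hSu).2.2 (u, v) hmem
  intro hacyc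
  apply hnot
  intro b hb
  apply hacyc b
  refine Relation.TransGen.mono (fun x y hxy => ?_) _ _ hb
  rcases hxy with hxy | hxy
  · exact Or.inl (Or.inr (Set.mem_biUnion hSumem hxy))
  · exact Or.inr hxy
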